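/- Let G be a finite solvable group and M ≤ G a maximal subgroup. If M is exponential in G, then M is normal in G. -/

import Mathlib

/-- A subgroup `H ≤ G` is exponential if it has finite index and `x ^ |G:H| ∈ H`
for every `x ∈ G`. -/
def IsExponential {G : Type*} [Group G] (H : Subgroup G) : Prop :=
  H.index ≠ 0 ∧ ∀ x : G, x ^ H.index ∈ H

open Subgroup Pointwise

/-- If an automorphism `φ` of an abelian group satisfies `∏_{i<n} φ^i v = 1` for all `v`,
then `φ ^ n` is the identity.  (Geometric series: `φ^n - 1 = (∑ φ^i)(φ - 1)`.) -/
private lemma aut_pow_apply_eq {A : Type*} [CommGroup A] (n : ℕ) (φ : MulAut A)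
    (h : ∀ v : A, ∏ i ∈ Finset.range n, (φ ^ i) v = 1) (v : A) : (φ ^ n) v = v := by
  let f : AddMonoid.End (Additive A) :=
    AddMonoidHom.mk' (fun w => Additive.ofMul (φ w.toMul)) (fun x y => by simp [map_mul])
  have hpow : ∀ (i : ℕ) (w : Additive A), (f ^ i) w = Additive.ofMul ((φ ^ i) w.toMul) := by
    intro i
    induction i with
    | zero => intro w; simp
    | succ i ih =>
      intro w
      rw [pow_succ, pow_succ]
      have h1 : (f ^ i * f) w = (f ^ i) (f w) := rfl
      have h2 : ((φ ^ i * φ) w.toMul) = (φ ^ i) (φ w.toMul) := rfl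
      rw [h1, h2, ih (f w)]
      rfl
  have hsum : (∑ i ∈ Finset.range n, f ^ i) = 0 := by
    refine AddMonoidHom.ext fun w => ?_
    have h1 : (∑ i ∈ Finset.range n, f ^ i) w = ∑ i ∈ Finset.range n, (f ^ i) w :=
      AddMonoidHom.finset_sum_apply _ _ _
    refine h1.trans ?_
    simp only [hpow]
    rw [← ofMul_prod, h w.toMul]
    rfl
  have key : f ^ n - 1 = 0 := by rw [← geom_sum_mul f n, hsum, zero_mul]
  have hfn : f ^ n = 1 := by rwa [sub_eq_zero] at key
  have := congrArg (fun g : AddMonoid.End (Additive A) => g (Additive.ofMul v)) hfn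
  simpa [hpow] using this

/-- A subgroup normalized by two subgroups whose join is everything is normal. -/
private lemma normal_of_sup_eq_top {G : Type*} [Group G] {A B H : Subgroup G}
    (hsup : A ⊔ B = ⊤)
    (hA : ∀ g ∈ A, ∀ h ∈ H, g * h * g⁻¹ ∈ H)
    (hB : ∀ g ∈ B, ∀ h ∈ H, g * h * g⁻¹ ∈ H) : H.Normal := by
  have key : ∀ S : Subgroup G, (∀ g ∈ S, ∀ h ∈ H, g * h * g⁻¹ ∈ H) → S ≤ Subgroup.normalizer (H : Set G) := by
    intro S hS g hg
    rw [Subgroup.mem_normalizer_iff]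
    intro h
    constructor
    · exact fun hh => hS g hg h hh
    · intro hh
      have h2 := hS g⁻¹ (S.inv_mem hg) _ hh
      have h3 : g⁻¹ * (g * h * g⁻¹) * g⁻¹⁻¹ = h := by group
      rwa [h3] at h2
  have htop : Subgroup.normalizer (H : Set G) = ⊤ :=
    top_le_iff.mp (hsup ▸ sup_le (key A hA) (key B hB))
  exact Subgroup.normalizer_eq_top_iff.mp htop

/-- The core case: an exponential maximal subgroup with trivial normal core is normal. -/
private lemma core_case {G : Type*} [Group G] [Finite G] [Group.IsSolvable G]
    (M : Subgroup G) (hmax : IsCoatom M) (hexp : IsExponential M)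
    (hcore : M.normalCore = ⊥) : M.Normal := by
  classical
  -- G is nontrivial
  have hne : (⊤ : Subgroup G) ≠ ⊥ := by
    intro h
    exact hmax.1 (le_antisymm le_top (le_trans (le_of_eq h) bot_le))
  -- a minimal nontrivial normal subgroup N
  have hS : ∃ k : ℕ, ∃ K : Subgroup G, (K.Normal ∧ K ≠ ⊥) ∧ Nat.card K = k :=
    ⟨Nat.card (⊤ : Subgroup G), ⊤, ⟨inferInstance, hne⟩, rfl⟩
  obtain ⟨N, ⟨hNnormal, hNbot⟩, hNcard⟩ := Nat.find_spec hS
  haveI := hNnormal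
  have hmin : ∀ K : Subgroup G, K.Normal → K ≠ ⊥ → K ≤ N → K = N := by
    intro K h1 h2 h3
    refine Subgroup.eq_of_le_of_card_ge h3 ?_
    have hfind : Nat.find hS ≤ Nat.card K := Nat.find_min' hS ⟨K, ⟨h1, h2⟩, rfl⟩
    calc Nat.card N = Nat.find hS := hNcard
      _ ≤ Nat.card K := hfind
  -- N is not contained in M, hence N ⊔ M = ⊤
  have hNM : ¬N ≤ M := by
    intro h
    exact hNbot (le_bot_iff.mp (hcore ▸ normal_le_normalCore.mpr h))
  have hsup : N ⊔ M = ⊤ := by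
    refine hmax.2 _ (lt_of_le_of_ne le_sup_right ?_)
    intro h
    exact hNM (h ▸ le_sup_left)
  -- N is abelian
  have hcommN : ∀ x ∈ N, ∀ y ∈ N, x * y = y * x := by
    have hle : ⁅N, N⁆ ≤ N := Subgroup.commutator_le_left N N
    by_cases hb : ⁅N, N⁆ = ⊥
    · intro x hx y hy
      exact (Subgroup.mem_centralizer_iff.mp
        ((Subgroup.commutator_eq_bot_iff_le_centralizer.mp hb) hx) y hy).symm
    · exfalso
      have heq : ⁅N, N⁆ = N := hmin _ (Subgroup.commutator_normal N N) hb hle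
      have hder : ∀ k, N ≤ derivedSeries G k := by
        intro k
        induction k with
        | zero => exact le_top
        | succ k ih =>
          rw [derivedSeries_succ]
          calc N = ⁅N, N⁆ := heq.symm
            _ ≤ ⁅derivedSeries G k, derivedSeries G k⁆ := Subgroup.commutator_mono ih ih
      obtain ⟨k, hk⟩ := (isSolvable_def G).mp ‹Group.IsSolvable G›
      exact hNbot (le_bot_iff.mp (hk ▸ hder k))
  -- N ⊓ M = ⊥
  have hinf_normal : (N ⊓ M).Normal := by
    refine normal_of_sup_eq_top hsup ?_ ?_
    · intro g hg h hh
      have hc : g * h = h * g := hcommN g hg h hh.1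
      have : g * h * g⁻¹ = h := by rw [hc, mul_inv_cancel_right]
      rw [this]; exact hh
    · intro g hg h hh
      exact ⟨hNnormal.conj_mem h hh.1 g, M.mul_mem (M.mul_mem hg hh.2) (M.inv_mem hg)⟩
  have hinf : N ⊓ M = ⊥ := by
    haveI := hinf_normal
    exact le_bot_iff.mp (hcore ▸ normal_le_normalCore.mpr inf_le_right)
  -- N complements M, so M.index = |N|
  have hmul : (N : Set G) * (M : Set G) = Set.univ := by
    rw [← Subgroup.normal_mul, hsup, Subgroup.coe_top]
  have hcompl : Subgroup.IsComplement' N M :=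
    Subgroup.isComplement'_of_disjoint_and_mul_eq_univ (disjoint_iff.mpr hinf) hmul
  have hindex : M.index = Nat.card N := hcompl.index_eq_card
  -- a prime p with N of exponent p
  have hcard1 : Nat.card N ≠ 1 := fun h => hNbot (Subgroup.card_eq_one.mp h)
  obtain ⟨p, hp, hpdvd⟩ := Nat.exists_prime_and_dvd hcard1
  haveI : Fact p.Prime := ⟨hp⟩
  obtain ⟨x, hx⟩ := exists_prime_orderOf_dvd_card' (G := ↥N) p hpdvd
  let P : Subgroup G :=
    { carrier := {g | g ∈ N ∧ g ^ p = 1}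
      one_mem' := ⟨N.one_mem, one_pow p⟩
      mul_mem' := fun {a b} ha hb => ⟨N.mul_mem ha.1 hb.1, by
        rw [(Commute.mul_pow (hcommN a ha.1 b hb.1) p), ha.2, hb.2, one_mul]⟩
      inv_mem' := fun {a} ha => ⟨N.inv_mem ha.1, by rw [inv_pow, ha.2, inv_one]⟩ }
  have hPnormal : P.Normal := by
    constructor
    intro a ha g
    exact ⟨hNnormal.conj_mem a ha.1 g, by rw [conj_pow, ha.2, mul_one, mul_inv_cancel]⟩
  have hPbot : P ≠ ⊥ := by
    intro h
    have hxP : (x : G) ∈ P := by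
      refine ⟨x.2, ?_⟩
      have hpx : x ^ p = 1 := by rw [← hx]; exact pow_orderOf_eq_one x
      have := congrArg (Subtype.val) hpx
      simpa using this
    rw [h, Subgroup.mem_bot] at hxP
    have : x = 1 := Subtype.ext hxP
    rw [this, orderOf_one] at hx
    exact hp.one_lt.ne hx
  have hPle : P ≤ N := fun g hg => hg.1
  have hPN : P = N := hmin P hPnormal hPbot hPle
  have hexpN : ∀ g ∈ N, g ^ p = 1 := by
    intro g hg
    have : g ∈ P := hPN ▸ hg
    exact this.2
  -- |N| = p ^ a
  have hpgroup : IsPGroup p ↥N := by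
    intro g
    exact ⟨1, by rw [pow_one]; exact Subtype.ext (by simpa using hexpN (g : G) g.2)⟩
  obtain ⟨a, ha⟩ := hpgroup.exists_card_eq
  -- the commutative group structure on N
  letI : CommGroup ↥N :=
    { (inferInstance : Group ↥N) with
      mul_comm := fun u w => Subtype.ext (hcommN u u.2 w w.2) }
  -- key: m ^ index centralizes N for m ∈ M
  have hcent : ∀ m ∈ M, ∀ y ∈ N, m ^ M.index * y * (m ^ M.index)⁻¹ = y := by
    intro m hm y hy
    set n := M.index with hn
    let φ : MulAut ↥N := MulAut.conjNormal m
    have hφpow : ∀ (i : ℕ) (w : ↥N), ((φ ^ i) w : G) = m ^ i * (w : G) * (m ^ i)⁻¹ := by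
      intro i w
      have : φ ^ i = MulAut.conjNormal (m ^ i) := (map_pow MulAut.conjNormal m i).symm
      rw [this]
      exact MulAut.conjNormal_apply (m ^ i) w
    have hprod : ∀ w : ↥N, ∏ i ∈ Finset.range n, (φ ^ i) w = 1 := by
      intro w
      have hstep : ∀ k : ℕ,
          ((w : G) * m) ^ k = ((∏ i ∈ Finset.range k, (φ ^ i) w : ↥N) : G) * m ^ k := by
        intro k
        induction k with
        | zero => simp
        | succ k ih =>
          rw [pow_succ, ih, Finset.prod_range_succ]
          push_cast
          rw [hφpow k w]
          group
      have h1 : ((w : G) * m) ^ n ∈ M := hexp.2 _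
      have h2 : m ^ n ∈ M := hexp.2 m
      have h3 : ((∏ i ∈ Finset.range n, (φ ^ i) w : ↥N) : G) ∈ M := by
        have := hstep n
        have heq : ((∏ i ∈ Finset.range n, (φ ^ i) w : ↥N) : G)
            = ((w : G) * m) ^ n * (m ^ n)⁻¹ := by
          rw [this, mul_inv_cancel_right]
        rw [heq]
        exact M.mul_mem h1 (M.inv_mem h2)
      have h4 : ((∏ i ∈ Finset.range n, (φ ^ i) w : ↥N) : G) ∈ N ⊓ M :=
        ⟨(∏ i ∈ Finset.range n, (φ ^ i) w : ↥N).2, h3⟩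
      rw [hinf, Subgroup.mem_bot] at h4
      exact Subtype.ext h4
    have := aut_pow_apply_eq n φ hprod ⟨y, hy⟩
    have hcoe := congrArg (Subtype.val) this
    rwa [hφpow n ⟨y, hy⟩] at hcoe
  -- the centralizer of N intersected with M is trivial
  have hCnormal : (Subgroup.centralizer (N : Set G) ⊓ M).Normal := by
    refine normal_of_sup_eq_top hsup ?_ ?_
    · intro g hg h hh
      have hc : g * h = h * g := (Subgroup.mem_centralizer_iff.mp hh.1 g hg)
      have : g * h * g⁻¹ = h := by rw [hc, mul_inv_cancel_right]
      rw [this]; exact hh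
    · intro g hg h hh
      refine Subgroup.mem_inf.mpr ⟨Subgroup.mem_centralizer_iff.mpr ?_,
        M.mul_mem (M.mul_mem hg hh.2) (M.inv_mem hg)⟩
      intro y hy
      have hy' : g⁻¹ * y * g⁻¹⁻¹ ∈ N := hNnormal.conj_mem y hy g⁻¹
      have hc := Subgroup.mem_centralizer_iff.mp hh.1 _ hy'
      simpa [mul_assoc] using congrArg (fun t => g * t * g⁻¹) hc
  have hC : Subgroup.centralizer (N : Set G) ⊓ M = ⊥ := by
    haveI := hCnormal
    exact le_bot_iff.mp (hcore ▸ normal_le_normalCore.mpr inf_le_right)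
  -- G is a p-group
  have hkey : ∀ g : G, g ^ (M.index * M.index) = 1 := by
    intro g
    have h1 : g ^ M.index ∈ M := hexp.2 g
    have h2 : (g ^ M.index) ^ M.index ∈ Subgroup.centralizer (N : Set G) := by
      rw [Subgroup.mem_centralizer_iff]
      intro y hy
      have h3 := hcent _ h1 y hy
      set c := (g ^ M.index) ^ M.index with hc
      have h6 : c * y = y * c := by
        have h7 := congrArg (fun t => t * c) h3
        simpa [mul_assoc] using h7
      exact h6.symm
    have h4 : (g ^ M.index) ^ M.index ∈ M := hexp.2 _
    have h5 : (g ^ M.index) ^ M.index ∈ Subgroup.centralizer (N : Set G) ⊓ M := ⟨h2, h4⟩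
    rw [hC, Subgroup.mem_bot] at h5
    rw [pow_mul]
    exact h5
  have hpG : IsPGroup p G := by
    intro g
    refine ⟨a + a, ?_⟩
    have : M.index * M.index = p ^ (a + a) := by rw [hindex, ha, pow_add]
    rw [← this]
    exact hkey g
  haveI := hpG.isNilpotent
  exact Subgroup.NormalizerCondition.normal_of_coatom M (normalizerCondition_of_isNilpotent (G := G)) hmax

/-- An exponential maximal subgroup of a finite solvable group is normal.
(`IsCoatom M` says `M` is maximal among proper subgroups.) -/
theorem normal_of_isExponential_maximal {G : Type*} [Group G] [Finite G] [Group.IsSolvable G]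
    (M : Subgroup G) (hmax : IsCoatom M) (hexp : IsExponential M) :
    M.Normal := by
  classical
  set K := M.normalCore with hK
  let π := QuotientGroup.mk' K
  have hπ : Function.Surjective π := QuotientGroup.mk'_surjective K
  have hker : π.ker = K := QuotientGroup.ker_mk' K
  have hkerM : π.ker ≤ M := by rw [hker]; exact M.normalCore_le
  set M' : Subgroup (G ⧸ K) := M.map π with hM'
  have hcomap : M'.comap π = M := by
    rw [hM', Subgroup.comap_map_eq, hker, sup_of_le_left M.normalCore_le]
  have hmax' : IsCoatom M' := by
    constructor
    · intro h
      apply hmax.1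
      rw [← hcomap, h, Subgroup.comap_top]
    · intro X hX
      have h1 : M < X.comap π := by
        have h0 : M'.comap π < X.comap π :=
          lt_of_le_of_ne (Subgroup.comap_mono hX.le)
            (fun h => hX.ne (Subgroup.comap_injective hπ h))
        rwa [hcomap] at h0
      have h2 : X.comap π = ⊤ := hmax.2 _ h1
      have := congrArg (Subgroup.map π) h2
      rwa [Subgroup.map_comap_eq_self_of_surjective hπ,
        Subgroup.map_top_of_surjective π hπ] at this
  have hidx : M'.index = M.index := Subgroup.index_map_eq M hπ hkerM
  have hexp' : IsExponential M' := by
    constructor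
    · rw [hidx]; exact hexp.1
    · intro y
      obtain ⟨x, rfl⟩ := hπ y
      rw [hidx, ← map_pow]
      exact Subgroup.mem_map_of_mem π (hexp.2 x)
  have hcore' : M'.normalCore = ⊥ := by
    have h1 : (M'.normalCore).comap π ≤ M :=
      le_trans (Subgroup.comap_mono M'.normalCore_le) (le_of_eq hcomap)
    haveI : ((M'.normalCore).comap π).Normal := Subgroup.Normal.comap inferInstance π
    have h2 : (M'.normalCore).comap π ≤ K := normal_le_normalCore.mpr h1
    have h4 : M'.normalCore ≤ ⊥ := by
      rw [← Subgroup.map_comap_eq_self_of_surjective hπ M'.normalCore]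
      refine le_trans (Subgroup.map_mono h2) ?_
      rw [Subgroup.map_le_iff_le_comap]
      intro k hk
      rw [Subgroup.mem_comap, Subgroup.mem_bot]
      rw [← hker] at hk
      exact hk
    exact le_bot_iff.mp h4
  have hnormal' : M'.Normal := core_case M' hmax' hexp' hcore'
  have := hnormal'.comap π
  rwa [hcomap] at this
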